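/- Let W_1,...,W_{n+v} be finite-dimensional subspaces of a vector space, S_{i→j} ≤ W_i for 1 ≤ i < j ≤ ℓ ≤ n, and suppose h(S_{i→j} | W_{n+u}) ≤ h(S_{i→j} | W_[i+1,n+u−1]) for all 1 ≤ i < j ≤ ℓ and 1 ≤ u ≤ v. Then (v+1)·dim(W_[1,n]) ≤ dim(W_[ℓ+1,n]) + Σ_{1≤i<j≤ℓ} dim(S_{i→j}) + Σ_{j≤ℓ} h(W_j | S_{[1,j−1]→j} + W_[j+1,n]) + Σ_{u=1}^{v} ( dim(W_[ℓ+1,n] + W_{n+u}) + Σ_{j≤ℓ} h(W_j | S_{[1,j−1]→j} + W_[j+1,n] + W_{n+u}) ), where S_{[1,j−1]→j} = Σ_{i<j} S_{i→j}. (Dimension version of Theorem 2.) -/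
import Mathlib

open Module Finset

noncomputable def condDim {F V : Type*} [Field F] [AddCommGroup V] [Module F V]
    (A B : Submodule F V) : ℤ :=
  (finrank F ↥(A ⊔ B) : ℤ) - (finrank F ↥B : ℤ)

namespace Stmt8Aux

variable {F V : Type*} [Field F] [AddCommGroup V] [Module F V]

lemma frZ_mono {X Y : Submodule F V} [FiniteDimensional F Y] (h : X ≤ Y) :
    (finrank F ↥X : ℤ) ≤ (finrank F ↥Y : ℤ) := by
  haveI := Submodule.finiteDimensional_of_le h
  exact_mod_cast Submodule.finrank_mono h

lemma submodZ (X Y Z : Submodule F V) [FiniteDimensional F X] [FiniteDimensional F Y]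
    [FiniteDimensional F Z] :
    (finrank F ↥(X ⊔ Y ⊔ Z) : ℤ) + (finrank F ↥Z : ℤ)
      ≤ (finrank F ↥(X ⊔ Z) : ℤ) + (finrank F ↥(Y ⊔ Z) : ℤ) := by
  have h1 := Submodule.finrank_sup_add_finrank_inf_eq (X ⊔ Z) (Y ⊔ Z)
  have h2 : Z ≤ (X ⊔ Z) ⊓ (Y ⊔ Z) := le_inf le_sup_right le_sup_right
  have h4 : (finrank F ↥Z : ℤ) ≤ (finrank F ↥((X ⊔ Z) ⊓ (Y ⊔ Z)) : ℤ) := frZ_mono h2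
  have h3 : (X ⊔ Z) ⊔ (Y ⊔ Z) = X ⊔ Y ⊔ Z := by
    rw [sup_sup_sup_comm, sup_idem]
  rw [h3] at h1
  have h1' : (finrank F ↥(X ⊔ Y ⊔ Z) : ℤ) + (finrank F ↥((X ⊔ Z) ⊓ (Y ⊔ Z)) : ℤ)
      = (finrank F ↥(X ⊔ Z) : ℤ) + (finrank F ↥(Y ⊔ Z) : ℤ) := by exact_mod_cast h1
  linarith

lemma condDim_nonneg (A B : Submodule F V) [FiniteDimensional F A] [FiniteDimensional F B] :
    0 ≤ condDim A B :=
  sub_nonneg.2 (frZ_mono le_sup_right)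

lemma condDim_antitone (A : Submodule F V) {B B' : Submodule F V} [FiniteDimensional F A]
    [FiniteDimensional F B] [FiniteDimensional F B'] (h : B' ≤ B) :
    condDim A B ≤ condDim A B' := by
  have hs := submodZ A B B'
  have e1 : A ⊔ B ⊔ B' = A ⊔ B := by rw [sup_assoc, sup_eq_left.2 h]
  have e2 : B ⊔ B' = B := sup_eq_left.2 h
  rw [e1, e2] at hs
  unfold condDim
  linarith

lemma condDim_bot (A : Submodule F V) : condDim A ⊥ = (finrank F ↥A : ℤ) := by
  rw [condDim, sup_bot_eq, finrank_bot]; ring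

lemma exchange (X Y N : Submodule F V) :
    condDim X N - condDim X (Y ⊔ N) = condDim Y N - condDim Y (X ⊔ N) := by
  unfold condDim
  rw [sup_left_comm X Y N]
  ring

lemma sum_tele (g : ℕ → ℤ) (v : ℕ) : ∑ u ∈ Icc 1 v, (g (u - 1) - g u) = g 0 - g v := by
  induction v with
  | zero => simp
  | succ v ih =>
      rw [Finset.sum_Icc_succ_top (by omega), ih]
      simp

lemma sum_tele' (g : ℕ → ℤ) (m : ℕ) : ∑ i ∈ Icc 1 m, (g (i + 1) - g i) = g (m + 1) - g 1 := by
  induction m with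
  | zero => simp
  | succ m ih =>
      rw [Finset.sum_Icc_succ_top (by omega), ih]
      ring

lemma Icc_insert (a b : ℕ) (h : a ≤ b) : Finset.Icc a b = insert a (Finset.Icc (a + 1) b) := by
  ext x
  simp only [Finset.mem_Icc, Finset.mem_insert]
  omega

lemma sup_peel {α : Type*} [CompleteLattice α] (f : ℕ → α) {a b : ℕ} (h : a ≤ b) :
    (Icc a b).sup f = f a ⊔ (Icc (a + 1) b).sup f := by
  rw [Icc_insert a b h, Finset.sup_insert]

/-- Chain rule over the interval `[1, ℓ]`. -/
lemma chainA (W : ℕ → Submodule F V) (n : ℕ) (Bu : Submodule F V) :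
    ∀ ℓ, ℓ ≤ n → (finrank F ↥((Icc 1 n).sup W ⊔ Bu) : ℤ)
      = (finrank F ↥((Icc (ℓ + 1) n).sup W ⊔ Bu) : ℤ)
        + ∑ j ∈ Icc 1 ℓ, condDim (W j) ((Icc (j + 1) n).sup W ⊔ Bu) := by
  intro ℓ
  induction ℓ with
  | zero => simp
  | succ ℓ ih =>
      intro h
      rw [Finset.sum_Icc_succ_top (by omega), ih (by omega)]
      have hpeel : (Icc (ℓ + 1) n).sup W = W (ℓ + 1) ⊔ (Icc (ℓ + 2) n).sup W :=
        sup_peel W (by omega)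
      unfold condDim
      rw [hpeel, sup_assoc]
      ring

/-- Chain rule over the sources `i` for a fixed sink `j ≥ 1`. -/
lemma chainJ (W : ℕ → Submodule F V) (S : ℕ → ℕ → Submodule F V) (n : ℕ) (Bu : Submodule F V)
    (j : ℕ) (hj : 1 ≤ j) :
    condDim (W j) ((Icc (j + 1) n).sup W ⊔ Bu)
      = condDim (W j) ((Icc 1 (j - 1)).sup (fun i => S i j) ⊔ (Icc (j + 1) n).sup W ⊔ Bu)
        + ∑ i ∈ Icc 1 (j - 1),
            (condDim (W j) ((Icc (i + 1) (j - 1)).sup (fun i' => S i' j)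
                ⊔ (Icc (j + 1) n).sup W ⊔ Bu)
             - condDim (W j) ((Icc i (j - 1)).sup (fun i' => S i' j)
                ⊔ (Icc (j + 1) n).sup W ⊔ Bu)) := by
  have ht := sum_tele' (fun i => condDim (W j) ((Icc i (j - 1)).sup (fun i' => S i' j)
      ⊔ (Icc (j + 1) n).sup W ⊔ Bu)) (j - 1)
  rw [ht]
  have h1 : j - 1 + 1 = j := by omega
  have h2 : Finset.Icc j (j - 1) = (∅ : Finset ℕ) := by
    apply Finset.Icc_eq_empty
    omega
  rw [h1, h2]
  simp

end Stmt8Aux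

open Stmt8Aux in
/-- Theorem 2, dimension version. -/
theorem stmt8 {F V : Type*} [Field F] [AddCommGroup V] [Module F V]
    (W : ℕ → Submodule F V) (S : ℕ → ℕ → Submodule F V)
    (hfdW : ∀ i, FiniteDimensional F ↥(W i)) (hfdS : ∀ i j, FiniteDimensional F ↥(S i j))
    (n ℓ v : ℕ) (hln : ℓ ≤ n)
    (hSW : ∀ i j, 1 ≤ i → i < j → j ≤ ℓ → S i j ≤ W i)
    (hvirt : ∀ i j u, 1 ≤ i → i < j → j ≤ ℓ → 1 ≤ u → u ≤ v →
      condDim (S i j) (W (n+u)) ≤ condDim (S i j) ((Finset.Icc (i+1) (n+u-1)).sup W)) :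
    ((v : ℤ) + 1) * (finrank F ↥((Finset.Icc 1 n).sup W) : ℤ)
    ≤ (finrank F ↥((Finset.Icc (ℓ+1) n).sup W) : ℤ)
      + (∑ j ∈ Finset.Icc 1 ℓ, ∑ i ∈ Finset.Icc 1 (j-1), (finrank F ↥(S i j) : ℤ))
      + (∑ j ∈ Finset.Icc 1 ℓ,
          condDim (W j) (((Finset.Icc 1 (j-1)).sup (fun i => S i j))
            ⊔ (Finset.Icc (j+1) n).sup W))
      + ∑ u ∈ Finset.Icc 1 v,
          ((finrank F ↥(((Finset.Icc (ℓ+1) n).sup W) ⊔ W (n+u)) : ℤ)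
            + ∑ j ∈ Finset.Icc 1 ℓ,
                condDim (W j) (((Finset.Icc 1 (j-1)).sup (fun i => S i j))
                  ⊔ (Finset.Icc (j+1) n).sup W ⊔ W (n+u))) := by
  haveI : ∀ i, FiniteDimensional F ↥(W i) := hfdW
  haveI : ∀ i j, FiniteDimensional F ↥(S i j) := hfdS
  -- level decomposition
  have hlevel : ∀ Bu : Submodule F V,
      (finrank F ↥((Icc 1 n).sup W ⊔ Bu) : ℤ)
        = (finrank F ↥((Icc (ℓ + 1) n).sup W ⊔ Bu) : ℤ)
          + ∑ j ∈ Icc 1 ℓ,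
            (condDim (W j) ((Icc 1 (j - 1)).sup (fun i => S i j) ⊔ (Icc (j + 1) n).sup W ⊔ Bu)
              + ∑ i ∈ Icc 1 (j - 1),
                (condDim (W j) ((Icc (i + 1) (j - 1)).sup (fun i' => S i' j)
                    ⊔ (Icc (j + 1) n).sup W ⊔ Bu)
                 - condDim (W j) ((Icc i (j - 1)).sup (fun i' => S i' j)
                    ⊔ (Icc (j + 1) n).sup W ⊔ Bu))) := by
    intro Bu
    rw [chainA W n Bu ℓ hln]
    congr 1
    apply Finset.sum_congr rfl
    intro j hj
    exact chainJ W S n Bu j (Finset.mem_Icc.1 hj).1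
  -- key per-pair telescoping bound
  have hkey : ∀ i j, 1 ≤ i → i < j → j ≤ ℓ →
      (condDim (W j) ((Icc (i + 1) (j - 1)).sup (fun i' => S i' j) ⊔ (Icc (j + 1) n).sup W)
        - condDim (W j) ((Icc i (j - 1)).sup (fun i' => S i' j) ⊔ (Icc (j + 1) n).sup W))
      + ∑ u ∈ Icc 1 v,
        (condDim (W j) ((Icc (i + 1) (j - 1)).sup (fun i' => S i' j)
            ⊔ (Icc (j + 1) n).sup W ⊔ W (n + u))
          - condDim (W j) ((Icc i (j - 1)).sup (fun i' => S i' j)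
            ⊔ (Icc (j + 1) n).sup W ⊔ W (n + u)))
      ≤ (finrank F ↥(S i j) : ℤ) := by
    intro i j hi1 hij hjl2
    have hjn : j ≤ n := le_trans hjl2 hln
    have hpeel : (Icc i (j - 1)).sup (fun i' => S i' j)
        = S i j ⊔ (Icc (i + 1) (j - 1)).sup (fun i' => S i' j) :=
      sup_peel _ (by omega)
    set K : Submodule F V :=
      W j ⊔ (Icc (j + 1) n).sup W ⊔ (Icc (i + 1) (j - 1)).sup (fun i' => S i' j) with hK
    set P : ℕ → Submodule F V := fun u => (Icc 1 u).sup (fun u' => W (n + u')) with hP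
    haveI : FiniteDimensional F ↥K := by rw [hK]; infer_instance
    haveI : ∀ u, FiniteDimensional F ↥(P u) := by intro u; rw [hP]; infer_instance
    set q : ℕ → ℤ := fun u => condDim (S i j) (K ⊔ P u) with hq
    have hqv : (0 : ℤ) ≤ q v := by
      rw [hq]; exact condDim_nonneg _ _
    -- u = 0 term
    have hE0 : condDim (W j) ((Icc (i + 1) (j - 1)).sup (fun i' => S i' j) ⊔ (Icc (j + 1) n).sup W)
        - condDim (W j) ((Icc i (j - 1)).sup (fun i' => S i' j) ⊔ (Icc (j + 1) n).sup W)
        ≤ (finrank F ↥(S i j) : ℤ) - q 0 := by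
      have e1 : (Icc i (j - 1)).sup (fun i' => S i' j) ⊔ (Icc (j + 1) n).sup W
          = S i j ⊔ ((Icc (i + 1) (j - 1)).sup (fun i' => S i' j) ⊔ (Icc (j + 1) n).sup W) := by
        rw [hpeel]; simp only [sup_assoc]
      rw [e1, exchange (W j) (S i j)
        ((Icc (i + 1) (j - 1)).sup (fun i' => S i' j) ⊔ (Icc (j + 1) n).sup W)]
      have b1 : condDim (S i j)
            ((Icc (i + 1) (j - 1)).sup (fun i' => S i' j) ⊔ (Icc (j + 1) n).sup W)
          ≤ condDim (S i j) ⊥ := condDim_antitone _ bot_le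
      rw [condDim_bot] at b1
      have b2 : q 0 ≤ condDim (S i j)
          (W j ⊔ ((Icc (i + 1) (j - 1)).sup (fun i' => S i' j) ⊔ (Icc (j + 1) n).sup W)) := by
        rw [hq]
        apply condDim_antitone
        apply sup_le
        · exact le_sup_of_le_left (le_sup_of_le_left le_sup_left)
        · apply sup_le
          · exact le_sup_of_le_left le_sup_right
          · exact le_sup_of_le_left (le_sup_of_le_left le_sup_right)
      linarith
    -- u ≥ 1 terms
    have hEu : ∀ u, 1 ≤ u → u ≤ v →
        condDim (W j) ((Icc (i + 1) (j - 1)).sup (fun i' => S i' j)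
            ⊔ (Icc (j + 1) n).sup W ⊔ W (n + u))
          - condDim (W j) ((Icc i (j - 1)).sup (fun i' => S i' j)
            ⊔ (Icc (j + 1) n).sup W ⊔ W (n + u))
        ≤ q (u - 1) - q u := by
      intro u hu1 huv
      have e1 : (Icc i (j - 1)).sup (fun i' => S i' j) ⊔ (Icc (j + 1) n).sup W ⊔ W (n + u)
          = S i j ⊔ ((Icc (i + 1) (j - 1)).sup (fun i' => S i' j)
              ⊔ (Icc (j + 1) n).sup W ⊔ W (n + u)) := by
        rw [hpeel]; simp only [sup_assoc]
      rw [e1, exchange (W j) (S i j)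
        ((Icc (i + 1) (j - 1)).sup (fun i' => S i' j) ⊔ (Icc (j + 1) n).sup W ⊔ W (n + u))]
      have b1 : condDim (S i j)
            ((Icc (i + 1) (j - 1)).sup (fun i' => S i' j) ⊔ (Icc (j + 1) n).sup W ⊔ W (n + u))
          ≤ condDim (S i j) (W (n + u)) := condDim_antitone _ le_sup_right
      have b2 := hvirt i j u hi1 hij hjl2 hu1 huv
      have b3 : condDim (S i j) ((Icc (i + 1) (n + u - 1)).sup W) ≤ q (u - 1) := by
        rw [hq]
        apply condDim_antitone
        apply sup_le
        · rw [hK]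
          apply sup_le
          · apply sup_le
            · exact Finset.le_sup (Finset.mem_Icc.2 ⟨by omega, by omega⟩)
            · exact Finset.sup_mono (Finset.Icc_subset_Icc (by omega) (by omega))
          · apply Finset.sup_le
            intro i' hi'
            have hmem := Finset.mem_Icc.1 hi'
            exact le_trans (hSW i' j (by omega) (by omega) hjl2)
              (Finset.le_sup (Finset.mem_Icc.2 ⟨by omega, by omega⟩))
        · rw [hP]
          apply Finset.sup_le
          intro u' hu'
          have hmem := Finset.mem_Icc.1 hu'
          exact Finset.le_sup (Finset.mem_Icc.2 ⟨by omega, by omega⟩)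
      have b4 : q u ≤ condDim (S i j)
          (W j ⊔ ((Icc (i + 1) (j - 1)).sup (fun i' => S i' j)
            ⊔ (Icc (j + 1) n).sup W ⊔ W (n + u))) := by
        rw [hq]
        apply condDim_antitone
        apply sup_le
        · exact le_sup_of_le_left (le_sup_of_le_left le_sup_left)
        · apply sup_le
          · apply sup_le
            · exact le_sup_of_le_left le_sup_right
            · exact le_sup_of_le_left (le_sup_of_le_left le_sup_right)
          · have : W (n + u) ≤ (Icc 1 u).sup (fun u' => W (n + u')) :=
              Finset.le_sup (f := fun u' => W (n + u')) (Finset.mem_Icc.2 ⟨hu1, le_refl u⟩)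
            rw [hP]
            exact le_sup_of_le_right this
      linarith
    have hsumEu : ∑ u ∈ Icc 1 v,
        (condDim (W j) ((Icc (i + 1) (j - 1)).sup (fun i' => S i' j)
            ⊔ (Icc (j + 1) n).sup W ⊔ W (n + u))
          - condDim (W j) ((Icc i (j - 1)).sup (fun i' => S i' j)
            ⊔ (Icc (j + 1) n).sup W ⊔ W (n + u)))
        ≤ ∑ u ∈ Icc 1 v, (q (u - 1) - q u) := by
      apply Finset.sum_le_sum
      intro u hu
      have hmem := Finset.mem_Icc.1 hu
      exact hEu u hmem.1 hmem.2
    have ht := sum_tele q v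
    linarith
  -- the u = 0 level
  have h0 := hlevel ⊥
  simp only [sup_bot_eq] at h0
  rw [sup_bot_eq, sup_bot_eq] at h0
  rw [Finset.sum_add_distrib] at h0
  -- the u ≥ 1 levels
  have hu : ∀ u ∈ Icc 1 v,
      (finrank F ↥((Icc 1 n).sup W) : ℤ)
        ≤ (finrank F ↥((Icc (ℓ + 1) n).sup W ⊔ W (n + u)) : ℤ)
          + (∑ j ∈ Icc 1 ℓ,
              condDim (W j) ((Icc 1 (j - 1)).sup (fun i => S i j)
                ⊔ (Icc (j + 1) n).sup W ⊔ W (n + u))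
            + ∑ j ∈ Icc 1 ℓ, ∑ i ∈ Icc 1 (j - 1),
                (condDim (W j) ((Icc (i + 1) (j - 1)).sup (fun i' => S i' j)
                    ⊔ (Icc (j + 1) n).sup W ⊔ W (n + u))
                 - condDim (W j) ((Icc i (j - 1)).sup (fun i' => S i' j)
                    ⊔ (Icc (j + 1) n).sup W ⊔ W (n + u)))) := by
    intro u _
    have h1 : (finrank F ↥((Icc 1 n).sup W) : ℤ)
        ≤ (finrank F ↥((Icc 1 n).sup W ⊔ W (n + u)) : ℤ) := frZ_mono le_sup_left
    have h2 := hlevel (W (n + u))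
    rw [Finset.sum_add_distrib] at h2
    linarith
  -- total sum of error terms
  have hsum :
      (∑ j ∈ Icc 1 ℓ, ∑ i ∈ Icc 1 (j - 1),
        (condDim (W j) ((Icc (i + 1) (j - 1)).sup (fun i' => S i' j) ⊔ (Icc (j + 1) n).sup W)
         - condDim (W j) ((Icc i (j - 1)).sup (fun i' => S i' j) ⊔ (Icc (j + 1) n).sup W)))
      + ∑ u ∈ Icc 1 v, ∑ j ∈ Icc 1 ℓ, ∑ i ∈ Icc 1 (j - 1),
          (condDim (W j) ((Icc (i + 1) (j - 1)).sup (fun i' => S i' j)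
              ⊔ (Icc (j + 1) n).sup W ⊔ W (n + u))
           - condDim (W j) ((Icc i (j - 1)).sup (fun i' => S i' j)
              ⊔ (Icc (j + 1) n).sup W ⊔ W (n + u)))
      ≤ ∑ j ∈ Icc 1 ℓ, ∑ i ∈ Icc 1 (j - 1), (finrank F ↥(S i j) : ℤ) := by
    rw [Finset.sum_comm, ← Finset.sum_add_distrib]
    apply Finset.sum_le_sum
    intro j hj
    rw [Finset.sum_comm, ← Finset.sum_add_distrib]
    apply Finset.sum_le_sum
    intro i hi
    have hjm := Finset.mem_Icc.1 hj
    have him := Finset.mem_Icc.1 hi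
    exact hkey i j him.1 (by omega) hjm.2
  -- assemble
  have hcard : ∑ u ∈ Icc 1 v, (finrank F ↥((Icc 1 n).sup W) : ℤ)
      = (v : ℤ) * (finrank F ↥((Icc 1 n).sup W) : ℤ) := by
    rw [Finset.sum_const, Nat.card_Icc, nsmul_eq_mul]
    norm_num
  have hstep := Finset.sum_le_sum hu
  have hsplit : ∑ u ∈ Icc 1 v,
      ((finrank F ↥((Icc (ℓ + 1) n).sup W ⊔ W (n + u)) : ℤ)
        + (∑ j ∈ Icc 1 ℓ,
            condDim (W j) ((Icc 1 (j - 1)).sup (fun i => S i j)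
              ⊔ (Icc (j + 1) n).sup W ⊔ W (n + u))
          + ∑ j ∈ Icc 1 ℓ, ∑ i ∈ Icc 1 (j - 1),
              (condDim (W j) ((Icc (i + 1) (j - 1)).sup (fun i' => S i' j)
                  ⊔ (Icc (j + 1) n).sup W ⊔ W (n + u))
               - condDim (W j) ((Icc i (j - 1)).sup (fun i' => S i' j)
                  ⊔ (Icc (j + 1) n).sup W ⊔ W (n + u)))))
      = ∑ u ∈ Icc 1 v,
          ((finrank F ↥((Icc (ℓ + 1) n).sup W ⊔ W (n + u)) : ℤ)
            + ∑ j ∈ Icc 1 ℓ,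
                condDim (W j) ((Icc 1 (j - 1)).sup (fun i => S i j)
                  ⊔ (Icc (j + 1) n).sup W ⊔ W (n + u)))
        + ∑ u ∈ Icc 1 v, ∑ j ∈ Icc 1 ℓ, ∑ i ∈ Icc 1 (j - 1),
            (condDim (W j) ((Icc (i + 1) (j - 1)).sup (fun i' => S i' j)
                ⊔ (Icc (j + 1) n).sup W ⊔ W (n + u))
             - condDim (W j) ((Icc i (j - 1)).sup (fun i' => S i' j)
                ⊔ (Icc (j + 1) n).sup W ⊔ W (n + u))) := by
    rw [← Finset.sum_add_distrib]
    apply Finset.sum_congr rfl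
    intro u _
    ring
  rw [hsplit] at hstep
  rw [hcard] at hstep
  linarith
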